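/- The flexibility τ of a signed graph G is zero if and only if G has no cycle containing both a positive edge and a negative edge. -/

import Mathlib

open scoped Classical
open Polynomial

namespace SGPaper

/-- A weighted signed graph on `n` vertices, given by its symmetric hollow
matrix of edge weights (a nonzero entry `w i j` is the weight of the edge `ij`;
positive edges have positive weight, negative edges negative weight). -/
structure WSG (n : ℕ) where
  w : Matrix (Fin n) (Fin n) ℝ
  symm : w.IsSymm
  loopless : ∀ i, w i i = 0

variable {n : ℕ}

/-- The underlying simple graph. -/
def WSG.graph (Γ : WSG n) : SimpleGraph (Fin n) :=
  SimpleGraph.fromRel (fun i j => Γ.w i j ≠ 0)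

/-- The spanning subgraph of positive edges. -/
def WSG.posGraph (Γ : WSG n) : SimpleGraph (Fin n) :=
  SimpleGraph.fromRel (fun i j => 0 < Γ.w i j)

/-- The spanning subgraph of negative edges. -/
def WSG.negGraph (Γ : WSG n) : SimpleGraph (Fin n) :=
  SimpleGraph.fromRel (fun i j => Γ.w i j < 0)

/-- Number of connected components of a graph. -/
noncomputable def comps {V : Type*} (G : SimpleGraph V) : ℕ :=
  Nat.card G.ConnectedComponent

/-- Weighted Laplacian `L = A - D`. -/
def WSG.lap (Γ : WSG n) : Matrix (Fin n) (Fin n) ℝ :=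
  Γ.w - Matrix.diagonal (fun i => ∑ j, Γ.w i j)

theorem WSG.lap_isHermitian (Γ : WSG n) : Γ.lap.IsHermitian := by
  have h : Γ.lap.IsSymm := Γ.symm.sub (Matrix.isSymm_diagonal _)
  exact Matrix.IsHermitian.ext fun i j => by
    first
    | simpa using h.apply i j
    | simpa using (h.apply i j).symm

/-- Number of positive eigenvalues of the Laplacian. -/
noncomputable def WSG.nPos (Γ : WSG n) : ℕ :=
  (Finset.univ.filter fun i => 0 < Γ.lap_isHermitian.eigenvalues i).card

/-- Number of negative eigenvalues of the Laplacian. -/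
noncomputable def WSG.nNeg (Γ : WSG n) : ℕ :=
  (Finset.univ.filter fun i => Γ.lap_isHermitian.eigenvalues i < 0).card

/-- Multiplicity of `0` as an eigenvalue of the Laplacian. -/
noncomputable def WSG.nZero (Γ : WSG n) : ℕ :=
  (Finset.univ.filter fun i => Γ.lap_isHermitian.eigenvalues i = 0).card

/-- The Laplacian inertia `(n₊, n₋, n₀)`. -/
noncomputable def WSG.inertia (Γ : WSG n) : ℕ × ℕ × ℕ := (Γ.nPos, Γ.nNeg, Γ.nZero)

/-- A signed graph: a pair of edge-disjoint simple graphs of positive and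
negative edges on the vertex set `Fin n`. -/
structure SignedGraph (n : ℕ) where
  pos : SimpleGraph (Fin n)
  neg : SimpleGraph (Fin n)
  disj : ∀ i j, ¬(pos.Adj i j ∧ neg.Adj i j)

/-- The underlying (unsigned) simple graph. -/
def SignedGraph.graph {n : ℕ} (G : SignedGraph n) : SimpleGraph (Fin n) := G.pos ⊔ G.neg

/-- `Γ` is a consistent weighting of the signed graph `G`: the positive edges of
`Γ` are exactly the positive edges of `G` and likewise for negative edges. -/
def Consistent {n : ℕ} (G : SignedGraph n) (Γ : WSG n) : Prop :=
  Γ.posGraph = G.pos ∧ Γ.negGraph = G.neg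

/-- `G` has the unique Laplacian inertia `T`: every consistent weighting of `G`
has Laplacian inertia `T`. -/
def HasUniqueInertia {n : ℕ} (G : SignedGraph n) (T : ℕ × ℕ × ℕ) : Prop :=
  ∀ Γ : WSG n, Consistent G Γ → Γ.inertia = T

set_option linter.unusedSectionVars false

section FlexAux

open SimpleGraph

variable {V : Type*} [Fintype V] [DecidableEq V]

private lemma reach_delete_of_reach {K : SimpleGraph V} {a b : V}
    (hab : (K.deleteEdges {s(a,b)}).Reachable a b)
    {x y : V} (hxy : K.Reachable x y) : (K.deleteEdges {s(a,b)}).Reachable x y := by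
  obtain ⟨w⟩ := hxy
  induction w with
  | nil => exact SimpleGraph.Reachable.refl _
  | @cons x' z' y' h p ih =>
    refine SimpleGraph.Reachable.trans ?_ ih
    by_cases he : s(x', z') = s(a, b)
    · rw [Sym2.eq_iff] at he
      rcases he with ⟨rfl, rfl⟩ | ⟨rfl, rfl⟩
      · exact hab
      · exact hab.symm
    · exact SimpleGraph.Adj.reachable
        (by simp only [SimpleGraph.deleteEdges_adj, Set.mem_singleton_iff]; exact ⟨h, he⟩)

private lemma comps_bot_eq : comps (⊥ : SimpleGraph V) = Fintype.card V := by
  have hbij : Function.Bijective ((⊥ : SimpleGraph V).connectedComponentMk) :=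
    ⟨fun x y h => SimpleGraph.reachable_bot.mp (SimpleGraph.ConnectedComponent.eq.mp h),
     fun c => c.exists_rep⟩
  rw [comps, ← Nat.card_eq_of_bijective _ hbij, Nat.card_eq_fintype_card]

private lemma comps_deleteEdges_eq {K : SimpleGraph V} {a b : V}
    (hab : (K.deleteEdges {s(a,b)}).Reachable a b) :
    comps (K.deleteEdges {s(a,b)}) = comps K := by
  have hle : K.deleteEdges {s(a,b)} ≤ K := SimpleGraph.deleteEdges_le _
  have hbij : Function.Bijective
      (SimpleGraph.ConnectedComponent.map (SimpleGraph.Hom.ofLE hle)) := by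
    constructor
    · intro c1 c2 hcc
      induction c1 using SimpleGraph.ConnectedComponent.ind with | _ x =>
      induction c2 using SimpleGraph.ConnectedComponent.ind with | _ y =>
      simp only [SimpleGraph.ConnectedComponent.map_mk] at hcc
      exact SimpleGraph.ConnectedComponent.eq.mpr
        (reach_delete_of_reach hab (SimpleGraph.ConnectedComponent.eq.mp hcc))
    · intro c
      induction c using SimpleGraph.ConnectedComponent.ind with | _ x =>
      exact ⟨_, SimpleGraph.ConnectedComponent.map_mk _ x⟩
  exact Nat.card_eq_of_bijective _ hbij

private lemma comps_deleteEdges_add_one {K : SimpleGraph V} {a b : V} (hadj : K.Adj a b)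
    (hnr : ¬ (K.deleteEdges {s(a,b)}).Reachable a b) :
    comps (K.deleteEdges {s(a,b)}) = comps K + 1 := by
  set K' := K.deleteEdges {s(a,b)} with hK'
  have tri : ∀ {x y : V}, K.Reachable x y →
      K'.Reachable x y ∨ (K'.Reachable x a ∧ K'.Reachable b y) ∨
        (K'.Reachable x b ∧ K'.Reachable a y) := by
    intro x y hxy
    obtain ⟨w⟩ := hxy
    induction w with
    | nil => exact Or.inl (SimpleGraph.Reachable.refl _)
    | @cons x' z' y' h p ih =>
      by_cases he : s(x', z') = s(a, b)
      · rw [Sym2.eq_iff] at he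
        rcases he with ⟨rfl, rfl⟩ | ⟨rfl, rfl⟩
        · rcases ih with h1 | ⟨h1, h2⟩ | ⟨h1, h2⟩
          · exact Or.inr (Or.inl ⟨SimpleGraph.Reachable.refl _, h1⟩)
          · exact absurd h1.symm hnr
          · exact Or.inl h2
        · rcases ih with h1 | ⟨h1, h2⟩ | ⟨h1, h2⟩
          · exact Or.inr (Or.inr ⟨SimpleGraph.Reachable.refl _, h1⟩)
          · exact Or.inl h2
          · exact absurd h1 hnr
      · have hadj' : K'.Adj x' z' := by
          rw [hK', SimpleGraph.deleteEdges_adj]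
          exact ⟨h, he⟩
        rcases ih with h1 | ⟨h1, h2⟩ | ⟨h1, h2⟩
        · exact Or.inl (hadj'.reachable.trans h1)
        · exact Or.inr (Or.inl ⟨hadj'.reachable.trans h1, h2⟩)
        · exact Or.inr (Or.inr ⟨hadj'.reachable.trans h1, h2⟩)
  have hle : K' ≤ K := SimpleGraph.deleteEdges_le _
  set φ := SimpleGraph.ConnectedComponent.map (SimpleGraph.Hom.ofLE hle) with hφ
  have hφmk : ∀ x : V, φ (K'.connectedComponentMk x) = K.connectedComponentMk x := fun x => rfl
  let F : K'.ConnectedComponent → K.ConnectedComponent ⊕ Unit := fun c =>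
    if c = K'.connectedComponentMk b then Sum.inr () else Sum.inl (φ c)
  have hFbij : Function.Bijective F := by
    constructor
    · intro c1 c2 hF
      by_cases h1 : c1 = K'.connectedComponentMk b <;>
        by_cases h2 : c2 = K'.connectedComponentMk b
      · rw [h1, h2]
      · simp only [F, if_pos h1, if_neg h2] at hF; exact absurd hF.symm (Sum.inl_ne_inr)
      · simp only [F, if_neg h1, if_pos h2] at hF; exact absurd hF Sum.inl_ne_inr
      · simp only [F, if_neg h1, if_neg h2, Sum.inl.injEq] at hF
        induction c1 using SimpleGraph.ConnectedComponent.ind with | _ x =>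
        induction c2 using SimpleGraph.ConnectedComponent.ind with | _ y =>
        rw [hφmk, hφmk] at hF
        rcases tri (SimpleGraph.ConnectedComponent.eq.mp hF) with t | ⟨t1, t2⟩ | ⟨t1, t2⟩
        · exact SimpleGraph.ConnectedComponent.eq.mpr t
        · exact absurd (SimpleGraph.ConnectedComponent.eq.mpr t2.symm) h2
        · exact absurd (SimpleGraph.ConnectedComponent.eq.mpr t1) h1
    · intro s
      rcases s with d | u
      · induction d using SimpleGraph.ConnectedComponent.ind with | _ x =>
        by_cases hx : K'.connectedComponentMk x = K'.connectedComponentMk b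
        · refine ⟨K'.connectedComponentMk a, ?_⟩
          have hne : K'.connectedComponentMk a ≠ K'.connectedComponentMk b := fun hcon =>
            hnr (SimpleGraph.ConnectedComponent.eq.mp hcon)
          simp only [F, if_neg hne, hφmk]
          congr 1
          exact SimpleGraph.ConnectedComponent.eq.mpr
            (hadj.reachable.trans
              ((SimpleGraph.ConnectedComponent.eq.mp hx).mono hle).symm)
        · exact ⟨K'.connectedComponentMk x, by simp only [F, if_neg hx, hφmk]⟩
      · exact ⟨K'.connectedComponentMk b, by simp only [F, if_pos rfl]⟩
  have hcard := Nat.card_eq_of_bijective F hFbij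
  have : Nat.card (K.ConnectedComponent ⊕ Unit) = Nat.card K.ConnectedComponent + 1 := by
    rw [Nat.card_sum]
    simp
  rw [comps, comps, hcard, this]

private lemma walk_decomp_at_edge {K : SimpleGraph V} {u v : V} (w : K.Walk u v) {e : Sym2 V}
    (he : e ∈ w.edges) :
    ∃ (x y : V) (hxy : K.Adj x y) (w1 : K.Walk u x) (w2 : K.Walk y v),
      e = s(x,y) ∧ w = w1.append (SimpleGraph.Walk.cons hxy w2) := by
  induction w with
  | nil => simp at he
  | @cons a c b h p ih =>
    rw [SimpleGraph.Walk.edges_cons, List.mem_cons] at he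
    rcases he with he | he
    · exact ⟨a, c, h, SimpleGraph.Walk.nil, p, he, rfl⟩
    · obtain ⟨x, y, hxy, w1, w2, h1, h2⟩ := ih he
      exact ⟨x, y, hxy, SimpleGraph.Walk.cons h w1, w2, h1, by
        rw [h2, SimpleGraph.Walk.cons_append]⟩

private lemma no_cycle_in_path_edges {K : SimpleGraph V} {u v : V} (p : K.Walk u v) :
    p.IsPath → ∀ {w : V} (c : K.Walk w w), c.IsCycle → (∀ g ∈ c.edges, g ∈ p.edges) → False := by
  induction p with
  | nil =>
    intro _ w c hc hsub
    have h3 := hc.three_le_length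
    have hne : c.edges ≠ [] := by
      intro h
      rw [← SimpleGraph.Walk.length_edges, h] at h3
      simp at h3
    obtain ⟨g, hg⟩ := List.exists_mem_of_ne_nil _ hne
    simpa using hsub g hg
  | @cons u z v h q ih =>
    intro hp w c hc hsub
    rw [SimpleGraph.Walk.cons_isPath_iff] at hp
    by_cases hu : u ∈ c.support
    · -- Any cycle through u with edges in (cons h q).edges repeats the edge s(u,z).
      have key : ∀ (d : K.Walk u u), d.IsCycle →
          (∀ g ∈ d.edges, g = s(u,z) ∨ g ∈ q.edges) → False := by
        intro d hd hdsub
        cases d with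
        | nil => exact hd.ne_nil rfl
        | @cons _ t _ hadj d' =>
          have h1 : s(u, t) = s(u, z) := by
            rcases hdsub s(u,t) (by simp) with h' | h'
            · exact h'
            · exact absurd (q.fst_mem_support_of_mem_edges h') hp.2
          obtain ⟨x, q2, h2, hconcat⟩ := SimpleGraph.Walk.exists_cons_eq_concat hadj d'
          have hmem : s(x, u) ∈ (SimpleGraph.Walk.cons hadj d').edges := by
            rw [hconcat, SimpleGraph.Walk.concat_eq_append, SimpleGraph.Walk.edges_append]
            simp
          have hlast : s(x, u) = s(u, z) := by
            rcases hdsub _ hmem with h' | h'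
            · exact h'
            · exact absurd (q.snd_mem_support_of_mem_edges h') hp.2
          -- the edge s(u,z) appears both as head and at the end of the edges list
          have hedges : (SimpleGraph.Walk.cons hadj d').edges = s(u, t) :: d'.edges := by
            simp [SimpleGraph.Walk.edges_cons]
          have hedges2 : (SimpleGraph.Walk.cons hadj d').edges = q2.edges ++ [s(x, u)] := by
            rw [hconcat, SimpleGraph.Walk.concat_eq_append, SimpleGraph.Walk.edges_append]
            simp
          have hd'ne : d'.edges ≠ [] := by
            intro hnil
            have h3 := hd.three_le_length
            have hlen2 : (SimpleGraph.Walk.cons hadj d').length = d'.length + 1 := by simp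
            have hlen : d'.edges.length = d'.length := SimpleGraph.Walk.length_edges d'
            rw [hnil] at hlen
            simp at hlen
            rw [hlen2] at h3
            omega
          have hlast_mem : s(u, z) ∈ d'.edges := by
            obtain ⟨M, l, hMl⟩ : ∃ (M : List (Sym2 V)) (l : Sym2 V), d'.edges = M.concat l :=
              (List.eq_nil_or_concat d'.edges).resolve_left hd'ne
            have hq : s(u, t) :: d'.edges = q2.edges ++ [s(x, u)] := by
              rw [← hedges, hedges2]
            have h5 : (s(u, t) :: d'.edges).getLast? = some s(x, u) := by
              rw [hq]; simp
            have h6 : (s(u, t) :: d'.edges).getLast? = some l := by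
              rw [hMl, List.concat_eq_append, ← List.cons_append]
              exact List.getLast?_concat
            have h7 : l = s(u, z) := by
              rw [h5] at h6
              rw [← hlast]
              exact (Option.some_injective _ h6.symm)
            rw [hMl, h7, List.concat_eq_append]
            simp
          have hnodup := hd.isCircuit.isTrail.edges_nodup
          rw [hedges, h1] at hnodup
          exact (List.nodup_cons.mp hnodup).1 hlast_mem
      refine key (c.rotate u hu) (hc.rotate hu) ?_
      intro g hg
      have hgc : g ∈ c.edges := (c.rotate_edges u hu).mem_iff.mp hg
      have := hsub g hgc
      rw [SimpleGraph.Walk.edges_cons, List.mem_cons] at this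
      exact this
    · refine ih hp.1 c hc ?_
      intro g hg
      have := hsub g hg
      rw [SimpleGraph.Walk.edges_cons, List.mem_cons] at this
      rcases this with rfl | h'
      · exact absurd (c.fst_mem_support_of_mem_edges hg) hu
      · exact h'

private lemma sup_deleteEdges_eq (P N : SimpleGraph V) {a b : V} (hP : ¬ P.Adj a b) :
    (P ⊔ N).deleteEdges {s(a,b)} = P ⊔ N.deleteEdges {s(a,b)} := by
  ext x y
  simp only [SimpleGraph.deleteEdges_adj, SimpleGraph.sup_adj, Set.mem_singleton_iff]
  constructor
  · rintro ⟨hpn | hn, hne⟩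
    · exact Or.inl hpn
    · exact Or.inr ⟨hn, hne⟩
  · rintro (hp | ⟨hn, hne⟩)
    · refine ⟨Or.inl hp, ?_⟩
      intro hcon
      rw [Sym2.eq_iff] at hcon
      rcases hcon with ⟨rfl, rfl⟩ | ⟨rfl, rfl⟩
      · exact hP hp
      · exact hP hp.symm
    · exact ⟨Or.inr hn, hne⟩

/-- A cycle in the union graph using edges of both `P` and `N`. -/
private def MixedCycle (P N : SimpleGraph V) : Prop :=
  ∃ (u : V) (p : (P ⊔ N).Walk u u), p.IsCycle ∧
    (∃ e ∈ p.edges, e ∈ P.edgeSet) ∧ (∃ e ∈ p.edges, e ∈ N.edgeSet)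

private lemma mixedCycle_mono {P N N' : SimpleGraph V} (hle : N' ≤ N) :
    MixedCycle P N' → MixedCycle P N := by
  rintro ⟨u, p, hp, ⟨f, hf, hfP⟩, ⟨e, he, heN⟩⟩
  have hG : P ⊔ N' ≤ P ⊔ N := sup_le_sup_left hle _
  have hedges : ∀ g ∈ p.edges, g ∈ (P ⊔ N).edgeSet := fun g hg =>
    (SimpleGraph.edgeSet_mono hG) (p.edges_subset_edgeSet hg)
  refine ⟨u, p.transfer _ hedges, hp.transfer _, ⟨f, ?_, hfP⟩, ⟨e, ?_, ?_⟩⟩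
  · rw [SimpleGraph.Walk.edges_transfer]; exact hf
  · rw [SimpleGraph.Walk.edges_transfer]; exact he
  · exact (SimpleGraph.edgeSet_mono hle) heN

private lemma flex_ineq : ∀ (m : ℕ) (P N : SimpleGraph V),
    (∀ i j, ¬(P.Adj i j ∧ N.Adj i j)) → N.edgeSet.ncard = m →
    comps P + comps N ≤ Fintype.card V + comps (P ⊔ N) := by
  intro m
  induction m with
  | zero =>
    intro P N _ hcard
    have hbot : N = ⊥ :=
      SimpleGraph.edgeSet_eq_empty.mp ((Set.ncard_eq_zero (Set.toFinite _)).mp hcard)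
    rw [hbot, sup_bot_eq, comps_bot_eq]
    omega
  | succ m ihm =>
    intro P N hd hcard
    obtain ⟨e, he⟩ : N.edgeSet.Nonempty := Set.nonempty_of_ncard_ne_zero (by omega)
    revert he
    induction e using Sym2.ind with | _ a b =>
    intro he
    have hNadj : N.Adj a b := (SimpleGraph.mem_edgeSet _).mp he
    have hPadj : ¬ P.Adj a b := fun hp => hd a b ⟨hp, hNadj⟩
    set N' := N.deleteEdges {s(a,b)} with hN'
    have f2 : (P ⊔ N).deleteEdges {s(a,b)} = P ⊔ N' := sup_deleteEdges_eq P N hPadj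
    have hd' : ∀ i j, ¬(P.Adj i j ∧ N'.Adj i j) := fun i j hij =>
      hd i j ⟨hij.1, (SimpleGraph.deleteEdges_adj.mp hij.2).1⟩
    have hcard' : N'.edgeSet.ncard = m := by
      rw [hN', SimpleGraph.edgeSet_deleteEdges]
      have := Set.ncard_diff_singleton_add_one he (Set.toFinite _)
      omega
    have IH := ihm P N' hd' hcard'
    by_cases hr : N'.Reachable a b
    · have e1 : comps N' = comps N := comps_deleteEdges_eq hr
      have e2 : comps (P ⊔ N') = comps (P ⊔ N) := by
        rw [← f2]
        exact comps_deleteEdges_eq (by rw [f2]; exact hr.mono le_sup_right)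
      omega
    · have e1 : comps N' = comps N + 1 := comps_deleteEdges_add_one hNadj hr
      by_cases hR : ((P ⊔ N).deleteEdges {s(a,b)}).Reachable a b
      · have e2 : comps (P ⊔ N') = comps (P ⊔ N) := by
          rw [← f2]; exact comps_deleteEdges_eq hR
        omega
      · have e2 : comps (P ⊔ N') = comps (P ⊔ N) + 1 := by
          rw [← f2]
          exact comps_deleteEdges_add_one ((SimpleGraph.sup_adj _ _ _ _).mpr (Or.inr hNadj)) hR
        omega

private lemma flex_eq_of_no_mixed : ∀ (m : ℕ) (P N : SimpleGraph V),
    (∀ i j, ¬(P.Adj i j ∧ N.Adj i j)) → N.edgeSet.ncard = m → ¬ MixedCycle P N →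
    Fintype.card V + comps (P ⊔ N) = comps P + comps N := by
  intro m
  induction m with
  | zero =>
    intro P N _ hcard _
    have hbot : N = ⊥ :=
      SimpleGraph.edgeSet_eq_empty.mp ((Set.ncard_eq_zero (Set.toFinite _)).mp hcard)
    rw [hbot, sup_bot_eq, comps_bot_eq]
    omega
  | succ m ihm =>
    intro P N hd hcard hmix
    obtain ⟨e, he⟩ : N.edgeSet.Nonempty := Set.nonempty_of_ncard_ne_zero (by omega)
    revert he
    induction e using Sym2.ind with | _ a b =>
    intro he
    have hNadj : N.Adj a b := (SimpleGraph.mem_edgeSet _).mp he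
    have hPadj : ¬ P.Adj a b := fun hp => hd a b ⟨hp, hNadj⟩
    set N' := N.deleteEdges {s(a,b)} with hN'
    have f2 : (P ⊔ N).deleteEdges {s(a,b)} = P ⊔ N' := sup_deleteEdges_eq P N hPadj
    have hd' : ∀ i j, ¬(P.Adj i j ∧ N'.Adj i j) := fun i j hij =>
      hd i j ⟨hij.1, (SimpleGraph.deleteEdges_adj.mp hij.2).1⟩
    have hcard' : N'.edgeSet.ncard = m := by
      rw [hN', SimpleGraph.edgeSet_deleteEdges]
      have := Set.ncard_diff_singleton_add_one he (Set.toFinite _)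
      omega
    have hmix' : ¬ MixedCycle P N' := fun hm =>
      hmix (mixedCycle_mono (SimpleGraph.deleteEdges_le _) hm)
    have IH := ihm P N' hd' hcard' hmix'
    by_cases hr : N'.Reachable a b
    · have e1 : comps N' = comps N := comps_deleteEdges_eq hr
      have e2 : comps (P ⊔ N') = comps (P ⊔ N) := by
        rw [← f2]
        exact comps_deleteEdges_eq (by rw [f2]; exact hr.mono le_sup_right)
      omega
    · have hbig : ¬ ((P ⊔ N).deleteEdges {s(a,b)}).Reachable a b := by
        intro hR
        obtain ⟨u, p, hp, hep⟩ :=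
          (SimpleGraph.adj_and_reachable_delete_edges_iff_exists_cycle).mp
            ⟨(SimpleGraph.sup_adj _ _ _ _).mpr (Or.inr hNadj), hR⟩
        have hallN : ∀ g ∈ p.edges, g ∈ N.edgeSet := by
          intro g hg
          have hPN := p.edges_subset_edgeSet hg
          rw [SimpleGraph.edgeSet_sup] at hPN
          refine hPN.resolve_left (fun hgP => ?_)
          exact hmix ⟨u, p, hp, ⟨g, hg, hgP⟩, ⟨s(a,b), hep, he⟩⟩
        have hNN := (SimpleGraph.adj_and_reachable_delete_edges_iff_exists_cycle (G := N)).mpr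
          ⟨u, p.transfer N hallN, hp.transfer _,
            by rw [SimpleGraph.Walk.edges_transfer]; exact hep⟩
        exact hr hNN.2
      have e1 : comps N' = comps N + 1 := comps_deleteEdges_add_one hNadj hr
      have e2 : comps (P ⊔ N') = comps (P ⊔ N) + 1 := by
        rw [← f2]
        exact comps_deleteEdges_add_one ((SimpleGraph.sup_adj _ _ _ _).mpr (Or.inr hNadj)) hbig
      omega

private lemma flex_strict : ∀ (m : ℕ) (P N : SimpleGraph V),
    (∀ i j, ¬(P.Adj i j ∧ N.Adj i j)) → N.edgeSet.ncard = m → MixedCycle P N →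
    comps P + comps N < Fintype.card V + comps (P ⊔ N) := by
  intro m
  induction m with
  | zero =>
    intro P N _ hcard hmix
    obtain ⟨u, p, hp, _, ⟨e, _, heN⟩⟩ := hmix
    have hbot : N.edgeSet = ∅ := (Set.ncard_eq_zero (Set.toFinite _)).mp hcard
    rw [hbot] at heN
    exact absurd heN (Set.notMem_empty e)
  | succ m ihm =>
    intro P N hd hcard hmix
    obtain ⟨u, c, hc, ⟨f, hfc, hfP⟩, ⟨e, hec, heN⟩⟩ := hmix
    revert hec heN
    induction e using Sym2.ind with | _ a b =>
    intro hec heN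
    have hNadj : N.Adj a b := (SimpleGraph.mem_edgeSet _).mp heN
    have hPadj : ¬ P.Adj a b := fun hp => hd a b ⟨hp, hNadj⟩
    set N' := N.deleteEdges {s(a,b)} with hN'
    have f2 : (P ⊔ N).deleteEdges {s(a,b)} = P ⊔ N' := sup_deleteEdges_eq P N hPadj
    have hd' : ∀ i j, ¬(P.Adj i j ∧ N'.Adj i j) := fun i j hij =>
      hd i j ⟨hij.1, (SimpleGraph.deleteEdges_adj.mp hij.2).1⟩
    have hcard' : N'.edgeSet.ncard = m := by
      rw [hN', SimpleGraph.edgeSet_deleteEdges]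
      have := Set.ncard_diff_singleton_add_one heN (Set.toFinite _)
      omega
    have hPNdisj : ∀ g, g ∈ P.edgeSet → g ∈ N.edgeSet → False := by
      intro g
      induction g using Sym2.ind with | _ i j =>
      intro h1 h2
      exact hd i j ⟨(SimpleGraph.mem_edgeSet _).mp h1, (SimpleGraph.mem_edgeSet _).mp h2⟩
    by_cases hr : N'.Reachable a b
    · -- hard case: build a mixed cycle avoiding the edge s(a,b)
      obtain ⟨x1, y1, hadj1, w1, w2, heq, hceq⟩ := walk_decomp_at_edge c hec
      have hcedges : c.edges = w1.edges ++ s(x1, y1) :: w2.edges := by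
        rw [hceq, SimpleGraph.Walk.edges_append, SimpleGraph.Walk.edges_cons]
      have hnodup : (w1.edges ++ s(x1, y1) :: w2.edges).Nodup := by
        rw [← hcedges]; exact hc.isCircuit.isTrail.edges_nodup
      rw [List.nodup_append] at hnodup
      have he_nw1 : s(x1, y1) ∉ w1.edges := fun h' => hnodup.2.2 _ h' _ List.mem_cons_self rfl
      have he_nw2 : s(x1, y1) ∉ w2.edges := (List.nodup_cons.mp hnodup.2.1).1
      set D := w2.append w1 with hD
      have hDedgeseq : D.edges = w2.edges ++ w1.edges := SimpleGraph.Walk.edges_append _ _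
      have hDpath : D.IsPath := by
        rw [SimpleGraph.Walk.isPath_def, hD, SimpleGraph.Walk.support_append]
        have hsup := hc.support_nodup
        have hcsup : c.support = w1.support ++ w2.support := by
          rw [hceq, SimpleGraph.Walk.support_append, SimpleGraph.Walk.support_cons,
            List.tail_cons]
        have hctail : c.support.tail = w1.support.tail ++ w2.support := by
          rw [hcsup, SimpleGraph.Walk.support_eq_cons w1, List.cons_append, List.tail_cons]
          rfl
        rw [hctail, List.nodup_append] at hsup
        rw [List.nodup_append]
        exact ⟨hsup.2.1, hsup.1, fun x hx1 y hy => (hsup.2.2 y hy x hx1).symm⟩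
      have heD : s(a, b) ∉ D.edges := by
        rw [heq, hDedgeseq]
        intro hmem
        rcases List.mem_append.mp hmem with h' | h'
        · exact he_nw2 h'
        · exact he_nw1 h'
      have hfD : f ∈ D.edges := by
        have hfne : f ≠ s(x1, y1) := by
          intro hff
          rw [hff, ← heq] at hfP
          exact hPadj ((SimpleGraph.mem_edgeSet _).mp hfP)
        rw [hcedges] at hfc
        rw [hDedgeseq]
        rcases List.mem_append.mp hfc with h' | h'
        · exact List.mem_append.mpr (Or.inr h')
        · rcases List.mem_cons.mp h' with h'' | h''
          · exact absurd h'' hfne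
          · exact List.mem_append.mpr (Or.inl h'')
      have hDbig : ∀ g ∈ D.edges, g ∈ (P ⊔ N').edgeSet := by
        intro g hg
        have hgc : g ∈ c.edges := by
          rw [hcedges]
          rw [hDedgeseq] at hg
          rcases List.mem_append.mp hg with h' | h'
          · exact List.mem_append.mpr (Or.inr (List.mem_cons.mpr (Or.inr h')))
          · exact List.mem_append.mpr (Or.inl h')
        have hgne : g ≠ s(a, b) := fun hgg => heD (hgg ▸ hg)
        rw [← f2, SimpleGraph.edgeSet_deleteEdges]
        exact ⟨c.edges_subset_edgeSet hgc, by simpa using hgne⟩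
      have hrQ := hr
      obtain ⟨Q⟩ := hrQ
      obtain ⟨Qw⟩ : Nonempty (N'.Walk y1 x1) := by
        rcases Sym2.eq_iff.mp heq with ⟨h1, h2⟩ | ⟨h1, h2⟩
        · subst h1; subst h2; exact ⟨Q.reverse⟩
        · subst h1; subst h2; exact ⟨Q⟩
      obtain ⟨x2, y2, hadj2, d1, d2, hfeq, hDeq⟩ := walk_decomp_at_edge D hfD
      have hDedges2 : D.edges = d1.edges ++ s(x2, y2) :: d2.edges := by
        rw [hDeq, SimpleGraph.Walk.edges_append, SimpleGraph.Walk.edges_cons]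
      have hDnodup : (d1.edges ++ s(x2, y2) :: d2.edges).Nodup := by
        rw [← hDedges2]; exact hDpath.isTrail.edges_nodup
      rw [List.nodup_append] at hDnodup
      have hf_nd1 : s(x2, y2) ∉ d1.edges := fun h' =>
        hDnodup.2.2 _ h' _ List.mem_cons_self rfl
      have hf_nd2 : s(x2, y2) ∉ d2.edges := (List.nodup_cons.mp hDnodup.2.1).1
      set S : Set (Sym2 V) := {g | g ∈ D.edges ∨ g ∈ Qw.edges} with hS
      set A := SimpleGraph.fromEdgeSet S with hA
      have hSedge : ∀ g ∈ D.edges, g ∈ A.edgeSet := by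
        intro g hg
        rw [hA, SimpleGraph.edgeSet_fromEdgeSet]
        exact ⟨Or.inl hg, (P ⊔ N).not_isDiag_of_mem_edgeSet (D.edges_subset_edgeSet hg)⟩
      have hSQ : ∀ g ∈ Qw.edges, g ∈ A.edgeSet := by
        intro g hg
        rw [hA, SimpleGraph.edgeSet_fromEdgeSet]
        exact ⟨Or.inr hg, N'.not_isDiag_of_mem_edgeSet (Qw.edges_subset_edgeSet hg)⟩
      have hfQw : s(x2, y2) ∉ Qw.edges := by
        intro hmem
        have h1 : s(x2, y2) ∈ N.edgeSet := by
          have := Qw.edges_subset_edgeSet hmem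
          rw [hN', SimpleGraph.edgeSet_deleteEdges] at this
          exact this.1
        exact hPNdisj _ (hfeq ▸ hfP) h1
      have hTd1 : ∀ g ∈ d1.reverse.edges, g ∈ (A.deleteEdges {s(x2, y2)}).edgeSet := by
        intro g hg
        rw [SimpleGraph.Walk.edges_reverse, List.mem_reverse] at hg
        rw [SimpleGraph.edgeSet_deleteEdges]
        refine ⟨hSedge g (by rw [hDedges2]; exact List.mem_append.mpr (Or.inl hg)), ?_⟩
        simp only [Set.mem_singleton_iff]
        intro h'
        rw [h'] at hg
        exact hf_nd1 hg
      have hTd2 : ∀ g ∈ d2.reverse.edges, g ∈ (A.deleteEdges {s(x2, y2)}).edgeSet := by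
        intro g hg
        rw [SimpleGraph.Walk.edges_reverse, List.mem_reverse] at hg
        rw [SimpleGraph.edgeSet_deleteEdges]
        refine ⟨hSedge g (by
          rw [hDedges2]
          exact List.mem_append.mpr (Or.inr (List.mem_cons.mpr (Or.inr hg)))), ?_⟩
        simp only [Set.mem_singleton_iff]
        intro h'
        rw [h'] at hg
        exact hf_nd2 hg
      have hTQ : ∀ g ∈ Qw.edges, g ∈ (A.deleteEdges {s(x2, y2)}).edgeSet := by
        intro g hg
        rw [SimpleGraph.edgeSet_deleteEdges]
        refine ⟨hSQ g hg, ?_⟩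
        simp only [Set.mem_singleton_iff]
        intro h'
        rw [h'] at hg
        exact hfQw hg
      have hreach : (A.deleteEdges {s(x2, y2)}).Reachable x2 y2 := by
        have W1 := d1.reverse.transfer (A.deleteEdges {s(x2, y2)}) hTd1
        have WQ := Qw.transfer (A.deleteEdges {s(x2, y2)}) hTQ
        have W2 := d2.reverse.transfer (A.deleteEdges {s(x2, y2)}) hTd2
        exact ⟨(W1.append WQ).append W2⟩
      have hAadj : A.Adj x2 y2 := by
        rw [hA, SimpleGraph.fromEdgeSet_adj]
        refine ⟨Or.inl (by rw [hDedges2]; simp), hadj2.ne⟩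
      obtain ⟨u2, z, hz, hfz⟩ :=
        (SimpleGraph.adj_and_reachable_delete_edges_iff_exists_cycle).mp ⟨hAadj, hreach⟩
      have hzS : ∀ g ∈ z.edges, g ∈ D.edges ∨ g ∈ Qw.edges := by
        intro g hg
        have := z.edges_subset_edgeSet hg
        rw [hA, SimpleGraph.edgeSet_fromEdgeSet] at this
        exact this.1
      have hexneg : ∃ g ∈ z.edges, g ∈ N'.edgeSet := by
        by_contra hno
        push_neg at hno
        have hallD : ∀ g ∈ z.edges, g ∈ D.edges := fun g hg =>
          (hzS g hg).resolve_right (fun h' => hno g hg (Qw.edges_subset_edgeSet h'))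
        exact no_cycle_in_path_edges D hDpath
          (z.transfer (P ⊔ N) (fun g hg => D.edges_subset_edgeSet (hallD g hg)))
          (hz.transfer _)
          (by rw [SimpleGraph.Walk.edges_transfer]; exact hallD)
      obtain ⟨g0, hg0z, hg0N'⟩ := hexneg
      have hzedges' : ∀ g ∈ z.edges, g ∈ (P ⊔ N').edgeSet := by
        intro g hg
        rcases hzS g hg with h' | h'
        · exact hDbig g h'
        · rw [SimpleGraph.edgeSet_sup]
          exact Or.inr (Qw.edges_subset_edgeSet h')
      have hmix' : MixedCycle P N' :=
        ⟨u2, z.transfer _ hzedges', hz.transfer _,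
          ⟨s(x2, y2), by rw [SimpleGraph.Walk.edges_transfer]; exact hfz, hfeq ▸ hfP⟩,
          ⟨g0, by rw [SimpleGraph.Walk.edges_transfer]; exact hg0z, hg0N'⟩⟩
      have IH := ihm P N' hd' hcard' hmix'
      have e1 : comps N' = comps N := comps_deleteEdges_eq hr
      have e2 : comps (P ⊔ N') = comps (P ⊔ N) := by
        rw [← f2]
        exact comps_deleteEdges_eq (by rw [f2]; exact hr.mono le_sup_right)
      omega
    · have hbr := (SimpleGraph.adj_and_reachable_delete_edges_iff_exists_cycle
        (G := P ⊔ N)).mpr ⟨u, c, hc, hec⟩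
      have e2 : comps (P ⊔ N') = comps (P ⊔ N) := by
        rw [← f2]
        exact comps_deleteEdges_eq hbr.2
      have e1 : comps N' = comps N + 1 := comps_deleteEdges_add_one hNadj hr
      have IH := flex_ineq m P N' hd' hcard'
      omega

end FlexAux

/-- The flexibility `τ = n + c - c₊ - c₋` of a signed graph is zero iff there is
no cycle containing both a positive edge and a negative edge. -/
theorem flexibility_zero_iff_no_mixed_cycle {n : ℕ} (G : SignedGraph n) :
    n + comps G.graph = comps G.pos + comps G.neg ↔
    ¬ ∃ (u : Fin n) (p : G.graph.Walk u u), p.IsCycle ∧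
        (∃ e ∈ p.edges, e ∈ G.pos.edgeSet) ∧ (∃ e ∈ p.edges, e ∈ G.neg.edgeSet) := by
  have hn : Fintype.card (Fin n) = n := Fintype.card_fin n
  have hmc : (∃ (u : Fin n) (p : G.graph.Walk u u), p.IsCycle ∧
      (∃ e ∈ p.edges, e ∈ G.pos.edgeSet) ∧ (∃ e ∈ p.edges, e ∈ G.neg.edgeSet)) ↔
      MixedCycle G.pos G.neg := Iff.rfl
  have hgr : G.graph = G.pos ⊔ G.neg := rfl
  constructor
  · intro heq hex
    have hstrict := flex_strict (G.neg.edgeSet.ncard) G.pos G.neg G.disj rfl (hmc.mp hex)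
    rw [hn] at hstrict
    rw [hgr] at heq
    omega
  · intro hne
    have hflex := flex_eq_of_no_mixed (G.neg.edgeSet.ncard) G.pos G.neg G.disj rfl
      (fun hm => hne (hmc.mpr hm))
    rw [hn] at hflex
    rw [hgr]
    omega

end SGPaper
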